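/- Let Z₁,…,Z_n be n blocks of length k extracted from a stationary process with process distribution P, with consecutive blocks separated by gaps of l symbols. Let Q⁽ⁿ⁾ be the joint distribution of (Z₁,…,Z_n) and Q̃⁽ⁿ⁾ be the product of n copies of the common marginal Pᵏ. Then the variational distance satisfies d(Q⁽ⁿ⁾, Q̃⁽ⁿ⁾) ≤ (n−1) β_P(l), where β_P(l) is the l-th order β-mixing coefficient of P. -/

import Mathlib

open MeasureTheory
open scoped ENNReal NNReal

/-- Variational distance: supremum over finite measurable partitions of
`∑ i |P(Aᵢ) - Q(Aᵢ)|`. -/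
noncomputable def varDist {Z : Type*} [MeasurableSpace Z] (P Q : Measure Z) : ℝ :=
  sSup {x : ℝ | ∃ (n : ℕ) (A : Fin n → Set Z),
    (∀ i, MeasurableSet (A i)) ∧ Pairwise (Function.onFun Disjoint A) ∧
    (⋃ i, A i) = Set.univ ∧ x = ∑ i, |(P (A i)).toReal - (Q (A i)).toReal|}

/-- σ-algebra of the past `σ(X⁰₋∞)` of a two-sided process. -/
def pastSigma (X : Type*) [MeasurableSpace X] : MeasurableSpace (ℤ → X) :=
  MeasurableSpace.comap (fun ω (i : {i : ℤ // i ≤ 0}) => ω i) inferInstance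

/-- σ-algebra of the far future `σ(X^∞_l)` of a two-sided process. -/
def futureSigma (X : Type*) [MeasurableSpace X] (l : ℕ) : MeasurableSpace (ℤ → X) :=
  MeasurableSpace.comap (fun ω (i : {i : ℤ // (l : ℤ) ≤ i}) => ω i) inferInstance

/-- `l`-th order β-mixing (absolute regularity) coefficient of a process distribution `P`:
the supremum over finite past-measurable partitions `{Aᵢ}` and finite future-measurable
partitions `{Bⱼ}` of `∑ᵢ∑ⱼ |P(Aᵢ ∩ Bⱼ) − P(Aᵢ)P(Bⱼ)|`. -/
noncomputable def betaMix {X : Type*} [MeasurableSpace X]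
    (P : Measure (ℤ → X)) (l : ℕ) : ℝ :=
  sSup {r : ℝ | ∃ (nA nB : ℕ) (A : Fin nA → Set (ℤ → X)) (B : Fin nB → Set (ℤ → X)),
    (∀ i, MeasurableSet[pastSigma X] (A i)) ∧ Pairwise (Function.onFun Disjoint A) ∧
    (⋃ i, A i) = Set.univ ∧
    (∀ j, MeasurableSet[futureSigma X l] (B j)) ∧ Pairwise (Function.onFun Disjoint B) ∧
    (⋃ j, B j) = Set.univ ∧
    r = ∑ i, ∑ j, |(P (A i ∩ B j)).toReal - (P (A i)).toReal * (P (B j)).toReal|}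

/-- Extraction of `n` blocks of length `k` separated by gaps of length `l`. -/
def blocks {X : Type*} (n k l : ℕ) : (ℤ → X) → (Fin n → Fin k → X) :=
  fun ω j i => ω ((j : ℤ) * ((k : ℤ) + (l : ℤ)) + (i : ℤ))


open MeasureTheory Set
open scoped symmDiff

namespace Blocking



variable {Z : Type*} [MeasurableSpace Z]

lemma toReal_measure_biUnion (μ : Measure Z) [IsProbabilityMeasure μ] {m : ℕ}
    {C : Fin m → Set Z} (hmeas : ∀ i, MeasurableSet (C i))
    (hdisj : Pairwise (Function.onFun Disjoint C)) (t : Finset (Fin m)) :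
    (μ (⋃ i ∈ t, C i)).toReal = ∑ i ∈ t, (μ (C i)).toReal := by
  rw [measure_biUnion_finset (fun i _ j _ hij => hdisj hij) (fun i _ => hmeas i),
      ENNReal.toReal_sum (fun i _ => measure_ne_top μ _)]

lemma sum_toReal_partition (μ : Measure Z) [IsProbabilityMeasure μ] {m : ℕ}
    {C : Fin m → Set Z} (hmeas : ∀ i, MeasurableSet (C i))
    (hdisj : Pairwise (Function.onFun Disjoint C)) (hcov : (⋃ i, C i) = univ) :
    ∑ i, (μ (C i)).toReal = 1 := by
  rw [← toReal_measure_biUnion μ hmeas hdisj Finset.univ]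
  have : (⋃ i ∈ Finset.univ, C i) = ⋃ i, C i := by simp
  rw [this, hcov, measure_univ, ENNReal.toReal_one]

lemma toReal_compl (μ : Measure Z) [IsProbabilityMeasure μ] {D : Set Z}
    (hD : MeasurableSet D) : (μ Dᶜ).toReal = 1 - (μ D).toReal := by
  rw [prob_compl_eq_one_sub hD, ENNReal.toReal_sub_of_le prob_le_one (by simp),
    ENNReal.toReal_one]

lemma partition_sum_le (μ μ' : Measure Z) [IsProbabilityMeasure μ] [IsProbabilityMeasure μ']
    {c : ℝ} (h : ∀ S : Set Z, MeasurableSet S → 2 * |(μ S).toReal - (μ' S).toReal| ≤ c)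
    {m : ℕ} {C : Fin m → Set Z} (hmeas : ∀ i, MeasurableSet (C i))
    (hdisj : Pairwise (Function.onFun Disjoint C)) (hcov : (⋃ i, C i) = univ) :
    ∑ i, |(μ (C i)).toReal - (μ' (C i)).toReal| ≤ c := by
  classical
  set p : Fin m → Prop := fun i => (μ' (C i)).toReal ≤ (μ (C i)).toReal with hp
  set I : Finset (Fin m) := Finset.univ.filter p with hI
  set Ic : Finset (Fin m) := Finset.univ.filter (fun i => ¬ p i) with hIc
  set D : Set Z := ⋃ i ∈ I, C i with hD
  have hDmeas : MeasurableSet D := Finset.measurableSet_biUnion _ (fun i _ => hmeas i)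
  have hcover' : ∀ x : Z, ∃ i, x ∈ C i := fun x => mem_iUnion.1 (hcov ▸ mem_univ x)
  have hDc : Dᶜ = ⋃ i ∈ Ic, C i := by
    ext x
    simp only [hD, hI, hIc, mem_compl_iff, mem_iUnion, Finset.mem_filter, Finset.mem_univ,
      true_and, exists_prop, not_exists, not_and]
    constructor
    · intro hx
      obtain ⟨i, hi⟩ := hcover' x
      by_cases hpi : p i
      · exact absurd hi (hx i hpi)
      · exact ⟨i, hpi, hi⟩
    · rintro ⟨i, hpi, hxi⟩ j hpj hxj
      have hij : i ≠ j := fun h => hpi (h ▸ hpj)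
      exact Set.disjoint_left.1 (hdisj hij) hxi hxj
  have hμD : (μ D).toReal = ∑ i ∈ I, (μ (C i)).toReal := toReal_measure_biUnion μ hmeas hdisj I
  have hμ'D : (μ' D).toReal = ∑ i ∈ I, (μ' (C i)).toReal := toReal_measure_biUnion μ' hmeas hdisj I
  have hμDc : (μ Dᶜ).toReal = ∑ i ∈ Ic, (μ (C i)).toReal := by
    rw [hDc]; exact toReal_measure_biUnion μ hmeas hdisj Ic
  have hμ'Dc : (μ' Dᶜ).toReal = ∑ i ∈ Ic, (μ' (C i)).toReal := by
    rw [hDc]; exact toReal_measure_biUnion μ' hmeas hdisj Ic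
  have hsplit : ∑ i, |(μ (C i)).toReal - (μ' (C i)).toReal|
      = (∑ i ∈ I, ((μ (C i)).toReal - (μ' (C i)).toReal))
        + ∑ i ∈ Ic, ((μ' (C i)).toReal - (μ (C i)).toReal) := by
    rw [← Finset.sum_filter_add_sum_filter_not Finset.univ p
      (fun i => |(μ (C i)).toReal - (μ' (C i)).toReal|)]
    congr 1
    · exact Finset.sum_congr rfl (fun i hi => abs_of_nonneg
        (by have := (Finset.mem_filter.1 hi).2; rw [hp] at this; linarith))
    · exact Finset.sum_congr rfl (fun i hi => by
        have := (Finset.mem_filter.1 hi).2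
        rw [hp] at this
        rw [abs_of_neg (by linarith [lt_of_not_ge this])]
        ring)
  have hkey := h D hDmeas
  have e1 : ∑ i ∈ I, ((μ (C i)).toReal - (μ' (C i)).toReal) = (μ D).toReal - (μ' D).toReal := by
    rw [Finset.sum_sub_distrib, hμD, hμ'D]
  have e2 : ∑ i ∈ Ic, ((μ' (C i)).toReal - (μ (C i)).toReal)
      = (μ' Dᶜ).toReal - (μ Dᶜ).toReal := by
    rw [Finset.sum_sub_distrib, hμDc, hμ'Dc]
  rw [hsplit, e1, e2, toReal_compl μ hDmeas, toReal_compl μ' hDmeas]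
  have habs : (μ D).toReal - (μ' D).toReal ≤ |(μ D).toReal - (μ' D).toReal| := le_abs_self _
  linarith




variable {Y₁ Y₂ : Type*} [MeasurableSpace Y₁] [MeasurableSpace Y₂]

/-- Finite unions of measurable rectangles. -/
def RectUnions (Y₁ Y₂ : Type*) [MeasurableSpace Y₁] [MeasurableSpace Y₂] :
    Set (Set (Y₁ × Y₂)) :=
  {S | ∃ (N : ℕ) (A : Fin N → Set Y₁) (B : Fin N → Set Y₂),
    (∀ t, MeasurableSet (A t)) ∧ (∀ t, MeasurableSet (B t)) ∧ S = ⋃ t, A t ×ˢ B t}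

lemma rectUnions_measurable {S : Set (Y₁ × Y₂)} (hS : S ∈ RectUnions Y₁ Y₂) :
    MeasurableSet S := by
  obtain ⟨N, A, B, hA, hB, rfl⟩ := hS
  exact MeasurableSet.iUnion (fun t => (hA t).prod (hB t))

lemma iUnion_fin_succ {α : Type*} {N : ℕ} (f : Fin (N + 1) → Set α) :
    (⋃ t, f t) = f 0 ∪ ⋃ t : Fin N, f t.succ := by
  ext x
  simp [mem_iUnion, Fin.exists_fin_succ]

lemma fin_add_cases' {N M : ℕ} (P : Fin (N + M) → Prop)
    (hl : ∀ u : Fin N, P (Fin.castAdd M u)) (hr : ∀ u : Fin M, P (Fin.natAdd N u)) :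
    ∀ t, P t := by
  intro t
  have h := finSumFinEquiv.apply_symm_apply t
  rw [← h]
  rcases finSumFinEquiv.symm t with u | u
  · rw [finSumFinEquiv_apply_left]; exact hl u
  · rw [finSumFinEquiv_apply_right]; exact hr u

lemma iUnion_fin_add {α : Type*} {N M : ℕ} (f : Fin (N + M) → Set α) :
    (⋃ t, f t) = (⋃ u : Fin N, f (Fin.castAdd M u)) ∪ ⋃ u : Fin M, f (Fin.natAdd N u) := by
  rw [← finSumFinEquiv.surjective.iUnion_comp f, iUnion_sum]
  simp only [finSumFinEquiv_apply_left, finSumFinEquiv_apply_right]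

lemma rectUnions_union {S T : Set (Y₁ × Y₂)} (hS : S ∈ RectUnions Y₁ Y₂)
    (hT : T ∈ RectUnions Y₁ Y₂) : S ∪ T ∈ RectUnions Y₁ Y₂ := by
  obtain ⟨N, A, B, hA, hB, rfl⟩ := hS
  obtain ⟨M, A', B', hA', hB', rfl⟩ := hT
  refine ⟨N + M, Fin.append A A', Fin.append B B',
    fin_add_cases' _ (fun u => by simpa [Fin.append_left] using hA u)
      (fun u => by simpa [Fin.append_right] using hA' u),
    fin_add_cases' _ (fun u => by simpa [Fin.append_left] using hB u)
      (fun u => by simpa [Fin.append_right] using hB' u), ?_⟩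
  rw [iUnion_fin_add]
  congr 1
  · exact iUnion_congr (fun u => by rw [Fin.append_left, Fin.append_left])
  · exact iUnion_congr (fun u => by rw [Fin.append_right, Fin.append_right])

lemma rectUnions_inter {S T : Set (Y₁ × Y₂)} (hS : S ∈ RectUnions Y₁ Y₂)
    (hT : T ∈ RectUnions Y₁ Y₂) : S ∩ T ∈ RectUnions Y₁ Y₂ := by
  classical
  obtain ⟨N, A, B, hA, hB, rfl⟩ := hS
  obtain ⟨M, A', B', hA', hB', rfl⟩ := hT
  let e : Fin (N * M) ≃ Fin N × Fin M := finProdFinEquiv.symm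
  refine ⟨N * M, fun t => A (e t).1 ∩ A' (e t).2, fun t => B (e t).1 ∩ B' (e t).2,
    fun t => (hA _).inter (hA' _), fun t => (hB _).inter (hB' _), ?_⟩
  ext x
  simp only [mem_inter_iff, mem_iUnion, mem_prod]
  constructor
  · rintro ⟨⟨t, ht⟩, ⟨u, hu⟩⟩
    refine ⟨e.symm (t, u), ?_⟩
    have he : e (e.symm (t, u)) = (t, u) := e.apply_symm_apply _
    rw [he]
    exact ⟨⟨ht.1, hu.1⟩, ⟨ht.2, hu.2⟩⟩
  · rintro ⟨t, ht⟩
    exact ⟨⟨(e t).1, ht.1.1, ht.2.1⟩, ⟨(e t).2, ht.1.2, ht.2.2⟩⟩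



variable {Y₁ Y₂ : Type*} [MeasurableSpace Y₁] [MeasurableSpace Y₂]

lemma rect_mem {A : Set Y₁} {B : Set Y₂} (hA : MeasurableSet A) (hB : MeasurableSet B) :
    A ×ˢ B ∈ RectUnions Y₁ Y₂ :=
  ⟨1, fun _ => A, fun _ => B, fun _ => hA, fun _ => hB, (Set.iUnion_const _).symm⟩

lemma rectUnions_empty : (∅ : Set (Y₁ × Y₂)) ∈ RectUnions Y₁ Y₂ :=
  ⟨0, Fin.elim0, Fin.elim0, fun t => t.elim0, fun t => t.elim0, by simp⟩

lemma rectUnions_compl_aux : ∀ (N : ℕ) (A : Fin N → Set Y₁) (B : Fin N → Set Y₂),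
    (∀ t, MeasurableSet (A t)) → (∀ t, MeasurableSet (B t)) →
    (⋃ t, A t ×ˢ B t)ᶜ ∈ RectUnions Y₁ Y₂ := by
  intro N
  induction N with
  | zero =>
    intro A B _ _
    simp only [iUnion_of_empty, compl_empty]
    simpa using rect_mem (MeasurableSet.univ (α := Y₁)) (MeasurableSet.univ (α := Y₂))
  | succ N ih =>
    intro A B hA hB
    rw [iUnion_fin_succ (fun t => A t ×ˢ B t), compl_union]
    refine rectUnions_inter ?_ (ih (fun t => A t.succ) (fun t => B t.succ)
      (fun t => hA _) (fun t => hB _))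
    rw [Set.compl_prod_eq_union]
    exact rectUnions_union (rect_mem (hA 0).compl MeasurableSet.univ)
      (rect_mem MeasurableSet.univ (hB 0).compl)

lemma rectUnions_compl {S : Set (Y₁ × Y₂)} (hS : S ∈ RectUnions Y₁ Y₂) :
    Sᶜ ∈ RectUnions Y₁ Y₂ := by
  obtain ⟨N, A, B, hA, hB, rfl⟩ := hS
  exact rectUnions_compl_aux N A B hA hB

lemma isSetAlgebra_rectUnions : MeasureTheory.IsSetAlgebra (RectUnions Y₁ Y₂) :=
  ⟨rectUnions_empty, fun _ hS => rectUnions_compl hS, fun _ _ hS hT => rectUnions_union hS hT⟩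

lemma measurableSpace_eq_generateFrom_rectUnions :
    (inferInstance : MeasurableSpace (Y₁ × Y₂))
      = MeasurableSpace.generateFrom (RectUnions Y₁ Y₂) := by
  apply le_antisymm
  · rw [← generateFrom_prod]
    refine MeasurableSpace.generateFrom_mono ?_
    rintro S ⟨A, hA, B, hB, rfl⟩
    exact rect_mem hA hB
  · exact MeasurableSpace.generateFrom_le (fun S hS => rectUnions_measurable hS)




lemma toReal_measure_biUnion' {Z : Type*} [MeasurableSpace Z] (μ : Measure Z)
    [IsProbabilityMeasure μ] {ι : Type*} {C : ι → Set Z} (hmeas : ∀ i, MeasurableSet (C i))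
    (hdisj : Pairwise (Function.onFun Disjoint C)) (t : Finset ι) :
    (μ (⋃ i ∈ t, C i)).toReal = ∑ i ∈ t, (μ (C i)).toReal := by
  rw [measure_biUnion_finset (fun i _ j _ hij => hdisj hij) (fun i _ => hmeas i),
      ENNReal.toReal_sum (fun i _ => measure_ne_top μ _)]

lemma toReal_compl' {Z : Type*} [MeasurableSpace Z] (μ : Measure Z) [IsProbabilityMeasure μ]
    {D : Set Z} (hD : MeasurableSet D) : (μ Dᶜ).toReal = 1 - (μ D).toReal := by
  rw [prob_compl_eq_one_sub hD, ENNReal.toReal_sub_of_le prob_le_one (by simp),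
    ENNReal.toReal_one]

section Grid

variable {α : Type*} {N : ℕ}

def atomOf (A : Fin N → Set α) (s : Fin N → Bool) : Set α :=
  ⋂ t, bif s t then A t else (A t)ᶜ

lemma atomOf_measurable [MeasurableSpace α] {A : Fin N → Set α}
    (hA : ∀ t, MeasurableSet (A t)) (s : Fin N → Bool) : MeasurableSet (atomOf A s) := by
  refine MeasurableSet.iInter fun t => ?_
  cases s t
  · exact (hA t).compl
  · exact hA t

lemma atomOf_pairwise (A : Fin N → Set α) :
    Pairwise (Function.onFun Disjoint (atomOf A)) := by
  intro s s' hne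
  obtain ⟨t, ht⟩ := Function.ne_iff.1 hne
  rw [Function.onFun, Set.disjoint_left]
  intro y hy hy'
  have h1 := mem_iInter.1 hy t
  have h2 := mem_iInter.1 hy' t
  revert h1 h2
  cases hs : s t <;> cases hs' : s' t <;> simp_all

lemma atomOf_cover (A : Fin N → Set α) : (⋃ s, atomOf A s) = univ := by
  classical
  ext y
  simp only [mem_iUnion, mem_univ, iff_true]
  refine ⟨fun t => decide (y ∈ A t), mem_iInter.2 fun t => ?_⟩
  by_cases h : y ∈ A t <;> simp [h]

end Grid

variable {Y₁ Y₂ : Type*} [MeasurableSpace Y₁] [MeasurableSpace Y₂]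

lemma rectUnion_bound (J K : Measure (Y₁ × Y₂)) [IsProbabilityMeasure J]
    [IsProbabilityMeasure K] {c : ℝ}
    (hc : ∀ (nA nB : ℕ) (A : Fin nA → Set Y₁) (B : Fin nB → Set Y₂),
      (∀ i, MeasurableSet (A i)) → Pairwise (Function.onFun Disjoint A) →
      (⋃ i, A i) = univ →
      (∀ j, MeasurableSet (B j)) → Pairwise (Function.onFun Disjoint B) →
      (⋃ j, B j) = univ →
      ∑ i, ∑ j, |(J (A i ×ˢ B j)).toReal - (K (A i ×ˢ B j)).toReal| ≤ c)
    {U : Set (Y₁ × Y₂)} (hU : U ∈ RectUnions Y₁ Y₂) :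
    2 * |(J U).toReal - (K U).toReal| ≤ c := by
  classical
  have hUmeas : MeasurableSet U := rectUnions_measurable hU
  obtain ⟨N, A, B, hA, hB, hUdef⟩ := hU
  set cell : (Fin N → Bool) × (Fin N → Bool) → Set (Y₁ × Y₂) :=
    fun p => atomOf A p.1 ×ˢ atomOf B p.2 with hcell
  have cellmeas : ∀ p, MeasurableSet (cell p) :=
    fun p => (atomOf_measurable hA _).prod (atomOf_measurable hB _)
  have celldisj : Pairwise (Function.onFun Disjoint cell) := by
    intro p q hpq
    by_cases h1 : p.1 = q.1
    · have h2 : p.2 ≠ q.2 := fun h => hpq (Prod.ext h1 h)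
      exact Disjoint.set_prod_right (atomOf_pairwise B h2) _ _
    · exact Disjoint.set_prod_left (atomOf_pairwise A h1) _ _
  have dich : ∀ p, cell p ⊆ U ∨ cell p ∩ U = ∅ := by
    intro p
    by_cases hne : (cell p ∩ U).Nonempty
    · left
      obtain ⟨y, hyc, hyU⟩ := hne
      rw [hUdef] at hyU
      obtain ⟨t, hyt⟩ := mem_iUnion.1 hyU
      have hst : p.1 t = true := by
        by_contra h
        have hf : p.1 t = false := by revert h; cases p.1 t <;> simp
        have h3 := mem_iInter.1 hyc.1 t
        rw [hf] at h3
        exact h3 hyt.1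
      have hrt : p.2 t = true := by
        by_contra h
        have hf : p.2 t = false := by revert h; cases p.2 t <;> simp
        have h3 := mem_iInter.1 hyc.2 t
        rw [hf] at h3
        exact h3 hyt.2
      intro z hz
      rw [hUdef]
      refine mem_iUnion.2 ⟨t, ?_, ?_⟩
      · have h3 := mem_iInter.1 hz.1 t; rw [hst] at h3; exact h3
      · have h3 := mem_iInter.1 hz.2 t; rw [hrt] at h3; exact h3
    · right; exact not_nonempty_iff_eq_empty.1 hne
  set T : Finset ((Fin N → Bool) × (Fin N → Bool)) :=
    Finset.univ.filter (fun p => cell p ⊆ U) with hT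
  set Tc : Finset ((Fin N → Bool) × (Fin N → Bool)) :=
    Finset.univ.filter (fun p => ¬ cell p ⊆ U) with hTc
  have memcell : ∀ y : Y₁ × Y₂, ∃ p, y ∈ cell p := by
    intro y
    have h1 : y.1 ∈ ⋃ s, atomOf A s := by rw [atomOf_cover]; exact mem_univ _
    have h2 : y.2 ∈ ⋃ r, atomOf B r := by rw [atomOf_cover]; exact mem_univ _
    obtain ⟨s, hs⟩ := mem_iUnion.1 h1
    obtain ⟨r, hr⟩ := mem_iUnion.1 h2
    exact ⟨(s, r), hs, hr⟩
  have hUeq : U = ⋃ p ∈ T, cell p := by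
    apply Subset.antisymm
    · intro y hy
      obtain ⟨p, hp⟩ := memcell y
      have hsub : cell p ⊆ U := by
        refine (dich p).resolve_right fun h => ?_
        exact eq_empty_iff_forall_notMem.1 h y ⟨hp, hy⟩
      exact mem_biUnion (Finset.mem_filter.2 ⟨Finset.mem_univ _, hsub⟩) hp
    · exact iUnion₂_subset fun p hp => (Finset.mem_filter.1 hp).2
  have hUceq : Uᶜ = ⋃ p ∈ Tc, cell p := by
    apply Subset.antisymm
    · intro y hy
      obtain ⟨p, hp⟩ := memcell y
      refine mem_biUnion (Finset.mem_filter.2 ⟨Finset.mem_univ _, fun hsub => hy (hsub hp)⟩) hp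
    · refine iUnion₂_subset fun p hp y hy => ?_
      have hns := (Finset.mem_filter.1 hp).2
      have hem := (dich p).resolve_left hns
      exact fun hyU => eq_empty_iff_forall_notMem.1 hem y ⟨hy, hyU⟩
  have hJU : (J U).toReal = ∑ p ∈ T, (J (cell p)).toReal := by
    rw [hUeq]; exact toReal_measure_biUnion' J cellmeas celldisj T
  have hKU : (K U).toReal = ∑ p ∈ T, (K (cell p)).toReal := by
    rw [hUeq]; exact toReal_measure_biUnion' K cellmeas celldisj T
  have hJUc : (J Uᶜ).toReal = ∑ p ∈ Tc, (J (cell p)).toReal := by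
    rw [hUceq]; exact toReal_measure_biUnion' J cellmeas celldisj Tc
  have hKUc : (K Uᶜ).toReal = ∑ p ∈ Tc, (K (cell p)).toReal := by
    rw [hUceq]; exact toReal_measure_biUnion' K cellmeas celldisj Tc
  have hgrid : ∑ p : (Fin N → Bool) × (Fin N → Bool),
      |(J (cell p)).toReal - (K (cell p)).toReal| ≤ c := by
    set eA : Fin (Fintype.card (Fin N → Bool)) ≃ (Fin N → Bool) :=
      (Fintype.equivFin (Fin N → Bool)).symm with heA
    have key := hc (Fintype.card (Fin N → Bool)) (Fintype.card (Fin N → Bool))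
      (fun i => atomOf A (eA i)) (fun j => atomOf B (eA j))
      (fun i => atomOf_measurable hA _)
      (fun i j hij => atomOf_pairwise A (fun h => hij (eA.injective h)))
      (by rw [eA.surjective.iUnion_comp (fun s => atomOf A s)]; exact atomOf_cover A)
      (fun j => atomOf_measurable hB _)
      (fun i j hij => atomOf_pairwise B (fun h => hij (eA.injective h)))
      (by rw [eA.surjective.iUnion_comp (fun s => atomOf B s)]; exact atomOf_cover B)
    calc ∑ p : (Fin N → Bool) × (Fin N → Bool), |(J (cell p)).toReal - (K (cell p)).toReal|
        = ∑ s, ∑ r, |(J (atomOf A s ×ˢ atomOf B r)).toReal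
            - (K (atomOf A s ×ˢ atomOf B r)).toReal| := Fintype.sum_prod_type _
      _ = ∑ i, ∑ j, |(J (atomOf A (eA i) ×ˢ atomOf B (eA j))).toReal
            - (K (atomOf A (eA i) ×ˢ atomOf B (eA j))).toReal| := by
          rw [← Equiv.sum_comp eA (fun s => ∑ r, |(J (atomOf A s ×ˢ atomOf B r)).toReal
            - (K (atomOf A s ×ˢ atomOf B r)).toReal|)]
          refine Finset.sum_congr rfl fun i _ => ?_
          rw [← Equiv.sum_comp eA (fun r => |(J (atomOf A (eA i) ×ˢ atomOf B r)).toReal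
            - (K (atomOf A (eA i) ×ˢ atomOf B r)).toReal|)]
      _ ≤ c := key
  have hsum_split : ∑ p ∈ T, |(J (cell p)).toReal - (K (cell p)).toReal|
      + ∑ p ∈ Tc, |(J (cell p)).toReal - (K (cell p)).toReal|
      = ∑ p : (Fin N → Bool) × (Fin N → Bool),
          |(J (cell p)).toReal - (K (cell p)).toReal| :=
    Finset.sum_filter_add_sum_filter_not Finset.univ _ _
  have hb1 : (J U).toReal - (K U).toReal
      ≤ ∑ p ∈ T, |(J (cell p)).toReal - (K (cell p)).toReal| := by
    rw [hJU, hKU, ← Finset.sum_sub_distrib]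
    exact Finset.sum_le_sum fun p _ => le_abs_self _
  have hb2 : (K Uᶜ).toReal - (J Uᶜ).toReal
      ≤ ∑ p ∈ Tc, |(J (cell p)).toReal - (K (cell p)).toReal| := by
    rw [hJUc, hKUc, ← Finset.sum_sub_distrib]
    exact Finset.sum_le_sum fun p _ => by rw [abs_sub_comm]; exact le_abs_self _
  have hb1' : (K U).toReal - (J U).toReal
      ≤ ∑ p ∈ T, |(J (cell p)).toReal - (K (cell p)).toReal| := by
    rw [hJU, hKU, ← Finset.sum_sub_distrib]
    exact Finset.sum_le_sum fun p _ => by rw [abs_sub_comm]; exact le_abs_self _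
  have hb2' : (J Uᶜ).toReal - (K Uᶜ).toReal
      ≤ ∑ p ∈ Tc, |(J (cell p)).toReal - (K (cell p)).toReal| := by
    rw [hJUc, hKUc, ← Finset.sum_sub_distrib]
    exact Finset.sum_le_sum fun p _ => le_abs_self _
  have hcJ := toReal_compl' J hUmeas
  have hcK := toReal_compl' K hUmeas
  have habs : |(J U).toReal - (K U).toReal| ≤ c / 2 := by
    rw [abs_le]
    constructor <;> nlinarith [hgrid, hsum_split, hb1, hb2, hb1', hb2']
  linarith


lemma diff_le_symmDiff {Z : Type*} [MeasurableSpace Z] (μ : Measure Z) [IsProbabilityMeasure μ]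
    (S U : Set Z) : |(μ S).toReal - (μ U).toReal| ≤ (μ (S ∆ U)).toReal := by
  have hSU : S ⊆ U ∪ S ∆ U := by
    intro x hx
    by_cases h : x ∈ U
    · exact Or.inl h
    · exact Or.inr (Set.mem_symmDiff.2 (Or.inl ⟨hx, h⟩))
  have hUS : U ⊆ S ∪ S ∆ U := by
    intro x hx
    by_cases h : x ∈ S
    · exact Or.inl h
    · exact Or.inr (Set.mem_symmDiff.2 (Or.inr ⟨hx, h⟩))
  have h1 : (μ S).toReal ≤ (μ U).toReal + (μ (S ∆ U)).toReal := by
    have h := (measure_mono hSU).trans (measure_union_le (μ := μ) U (S ∆ U))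
    calc (μ S).toReal ≤ ((μ U) + μ (S ∆ U)).toReal :=
          ENNReal.toReal_mono (ENNReal.add_ne_top.2 ⟨measure_ne_top _ _, measure_ne_top _ _⟩) h
      _ = (μ U).toReal + (μ (S ∆ U)).toReal :=
          ENNReal.toReal_add (measure_ne_top _ _) (measure_ne_top _ _)
  have h2 : (μ U).toReal ≤ (μ S).toReal + (μ (S ∆ U)).toReal := by
    have h := (measure_mono hUS).trans (measure_union_le (μ := μ) S (S ∆ U))
    calc (μ U).toReal ≤ ((μ S) + μ (S ∆ U)).toReal :=
          ENNReal.toReal_mono (ENNReal.add_ne_top.2 ⟨measure_ne_top _ _, measure_ne_top _ _⟩) h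
      _ = (μ S).toReal + (μ (S ∆ U)).toReal :=
          ENNReal.toReal_add (measure_ne_top _ _) (measure_ne_top _ _)
  exact abs_le.2 ⟨by linarith, by linarith⟩

lemma abstract_bound {Y₁ Y₂ : Type*} [MeasurableSpace Y₁] [MeasurableSpace Y₂]
    (J K : Measure (Y₁ × Y₂)) [IsProbabilityMeasure J] [IsProbabilityMeasure K]
    {c : ℝ}
    (hc : ∀ (nA nB : ℕ) (A : Fin nA → Set Y₁) (B : Fin nB → Set Y₂),
      (∀ i, MeasurableSet (A i)) → Pairwise (Function.onFun Disjoint A) →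
      (⋃ i, A i) = univ →
      (∀ j, MeasurableSet (B j)) → Pairwise (Function.onFun Disjoint B) →
      (⋃ j, B j) = univ →
      ∑ i, ∑ j, |(J (A i ×ˢ B j)).toReal - (K (A i ×ˢ B j)).toReal| ≤ c)
    (S : Set (Y₁ × Y₂)) (hS : MeasurableSet S) :
    2 * |(J S).toReal - (K S).toReal| ≤ c := by
  have hdense : (J + K).MeasureDense (RectUnions Y₁ Y₂) :=
    Measure.MeasureDense.of_generateFrom_isSetAlgebra_finite (J + K) isSetAlgebra_rectUnions
      measurableSpace_eq_generateFrom_rectUnions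
  refine le_of_forall_pos_le_add fun ε hε => ?_
  obtain ⟨U, hUmem, hUapp⟩ := hdense.approx S hS (measure_ne_top _ _) (ε / 4) (by linarith)
  have hbound := rectUnion_bound J K hc hUmem
  have hJsd : (J (S ∆ U)).toReal ≤ ((J + K) (S ∆ U)).toReal := by
    apply ENNReal.toReal_mono (measure_ne_top _ _)
    rw [Measure.add_apply]
    exact le_self_add
  have hKsd : (K (S ∆ U)).toReal ≤ ((J + K) (S ∆ U)).toReal := by
    apply ENNReal.toReal_mono (measure_ne_top _ _)
    rw [Measure.add_apply]
    exact le_add_self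
  have hlt : ((J + K) (S ∆ U)).toReal < ε / 4 :=
    (ENNReal.lt_ofReal_iff_toReal_lt (measure_ne_top _ _)).1 hUapp
  have h1 := diff_le_symmDiff J S U
  have h2 := diff_le_symmDiff K S U
  have e1 : |(J S).toReal - (K S).toReal|
      ≤ |(J S).toReal - (J U).toReal| + |(J U).toReal - (K U).toReal|
        + |(K U).toReal - (K S).toReal| :=
    (abs_sub_le _ _ _).trans (by
      have := abs_sub_le ((J U).toReal) ((K U).toReal) ((K S).toReal)
      linarith)
  have h2' : |(K U).toReal - (K S).toReal| ≤ (K (S ∆ U)).toReal := by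
    rw [abs_sub_comm]; exact h2
  linarith

lemma pastSigma_le {X : Type*} [MeasurableSpace X] {S : Set (ℤ → X)}
    (hS : MeasurableSet[pastSigma X] S) : MeasurableSet S := by
  obtain ⟨S', hS', rfl⟩ := hS
  have hm : Measurable (fun (ω : ℤ → X) (i : {i : ℤ // i ≤ 0}) => ω (i : ℤ)) :=
    measurable_pi_lambda _ (fun i => measurable_pi_apply _)
  exact hm hS'

lemma futureSigma_le {X : Type*} [MeasurableSpace X] {l : ℕ} {S : Set (ℤ → X)}
    (hS : MeasurableSet[futureSigma X l] S) : MeasurableSet S := by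
  obtain ⟨S', hS', rfl⟩ := hS
  have hm : Measurable (fun (ω : ℤ → X) (i : {i : ℤ // (l : ℤ) ≤ i}) => ω (i : ℤ)) :=
    measurable_pi_lambda _ (fun i => measurable_pi_apply _)
  exact hm hS'

section Beta

variable {X : Type*} [MeasurableSpace X] (P : Measure (ℤ → X)) [IsProbabilityMeasure P] (l : ℕ)

def betaSet : Set ℝ :=
  {r : ℝ | ∃ (nA nB : ℕ) (A : Fin nA → Set (ℤ → X)) (B : Fin nB → Set (ℤ → X)),
    (∀ i, MeasurableSet[pastSigma X] (A i)) ∧ Pairwise (Function.onFun Disjoint A) ∧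
    (⋃ i, A i) = Set.univ ∧
    (∀ j, MeasurableSet[futureSigma X l] (B j)) ∧ Pairwise (Function.onFun Disjoint B) ∧
    (⋃ j, B j) = Set.univ ∧
    r = ∑ i, ∑ j, |(P (A i ∩ B j)).toReal - (P (A i)).toReal * (P (B j)).toReal|}

lemma betaMix_eq_sSup : betaMix P l = sSup (betaSet P l) := rfl

lemma betaSet_le_two {r : ℝ} (hr : r ∈ betaSet P l) : r ≤ 2 := by
  obtain ⟨nA, nB, A, B, hA, hAd, hAc, hB, hBd, hBc, rfl⟩ := hr
  have hA' : ∀ i, MeasurableSet (A i) := fun i => pastSigma_le (hA i)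
  have hB' : ∀ j, MeasurableSet (B j) := fun j => futureSigma_le (hB j)
  have key : ∀ i, ∑ j, (P (A i ∩ B j)).toReal = (P (A i)).toReal := by
    intro i
    have hmeas : ∀ j, MeasurableSet (A i ∩ B j) := fun j => (hA' i).inter (hB' j)
    have hdisj : Pairwise (Function.onFun Disjoint (fun j => A i ∩ B j)) :=
      fun j j' hjj' => ((hBd hjj').mono inter_subset_right inter_subset_right)
    have := toReal_measure_biUnion' P hmeas hdisj Finset.univ
    have hun : (⋃ j ∈ Finset.univ, A i ∩ B j) = A i := by
      simp only [Finset.mem_univ, iUnion_true, ← inter_iUnion, hBc, inter_univ]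
    rw [hun] at this
    rw [← this]
  have keyA : ∑ i, (P (A i)).toReal = 1 := sum_toReal_partition P hA' hAd hAc
  have keyB : ∑ j, (P (B j)).toReal = 1 := sum_toReal_partition P hB' hBd hBc
  have hle : ∑ i, ∑ j, |(P (A i ∩ B j)).toReal - (P (A i)).toReal * (P (B j)).toReal|
      ≤ ∑ i, ∑ j, ((P (A i ∩ B j)).toReal + (P (A i)).toReal * (P (B j)).toReal) := by
    refine Finset.sum_le_sum fun i _ => Finset.sum_le_sum fun j _ => ?_
    have h1 : (0:ℝ) ≤ (P (A i ∩ B j)).toReal := ENNReal.toReal_nonneg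
    have h2 : (0:ℝ) ≤ (P (A i)).toReal * (P (B j)).toReal :=
      mul_nonneg ENNReal.toReal_nonneg ENNReal.toReal_nonneg
    rcases abs_cases ((P (A i ∩ B j)).toReal - (P (A i)).toReal * (P (B j)).toReal) with
      ⟨h, _⟩ | ⟨h, _⟩ <;> rw [h] <;> linarith
  have e1 : ∑ i, ∑ j, ((P (A i ∩ B j)).toReal + (P (A i)).toReal * (P (B j)).toReal) = 2 := by
    have hrow : ∀ i, ∑ j, ((P (A i ∩ B j)).toReal + (P (A i)).toReal * (P (B j)).toReal)
        = (P (A i)).toReal + (P (A i)).toReal := by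
      intro i
      rw [Finset.sum_add_distrib, key i, ← Finset.mul_sum, keyB, mul_one]
    rw [Finset.sum_congr rfl (fun i _ => hrow i), Finset.sum_add_distrib, keyA]
    norm_num
  linarith

lemma betaSet_bddAbove : BddAbove (betaSet P l) :=
  ⟨2, fun _ hr => betaSet_le_two P l hr⟩

lemma betaSet_zero_mem : (0 : ℝ) ∈ betaSet P l := by
  refine ⟨1, 1, fun _ => univ, fun _ => univ, fun _ => MeasurableSet.univ,
    Subsingleton.pairwise, iUnion_const _, fun _ => MeasurableSet.univ, Subsingleton.pairwise,
    iUnion_const _, ?_⟩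
  simp [measure_univ]

lemma betaMix_nonneg : 0 ≤ betaMix P l :=
  le_csSup (betaSet_bddAbove P l) (betaSet_zero_mem P l)

lemma le_betaMix {r : ℝ} (hr : r ∈ betaSet P l) : r ≤ betaMix P l :=
  le_csSup (betaSet_bddAbove P l) hr

end Beta

section Core

variable {X : Type*} [MeasurableSpace X]

def shif (m : ℕ) : (ℤ → X) → (ℤ → X) := fun ω i => ω (i + m)

lemma shif_measurable (m : ℕ) : Measurable (shif (X := X) m) :=
  measurable_pi_lambda _ (fun i => measurable_pi_apply _)

variable (P : Measure (ℤ → X)) [IsProbabilityMeasure P]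

lemma map_shif (hstat : ∀ A : Set (ℤ → X), MeasurableSet A →
    P ((fun ω i => ω (i + 1)) ⁻¹' A) = P A) (m : ℕ) : P.map (shif m) = P := by
  induction m with
  | zero =>
    have h : shif (X := X) 0 = id := by funext ω i; simp [shif]
    rw [h, Measure.map_id]
  | succ m ih =>
    have hcomp : shif (X := X) (m + 1) = shif 1 ∘ shif m := by
      funext ω i
      show ω (i + ((m : ℤ) + 1)) = ω (i + 1 + (m : ℤ))
      · congr 1
        push_cast
        ring
    rw [hcomp, ← Measure.map_map (shif_measurable 1) (shif_measurable m), ih]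
    refine Measure.ext fun A hA => ?_
    rw [Measure.map_apply (shif_measurable 1) hA]
    have h1 : shif (X := X) 1 = fun ω i => ω (i + 1) := by
      funext ω i
      show ω (i + ((1 : ℕ) : ℤ)) = ω (i + 1)
      norm_num
    rw [h1]
    exact hstat A hA

lemma core_bound (hstat : ∀ A : Set (ℤ → X), MeasurableSet A →
      P ((fun ω i => ω (i + 1)) ⁻¹' A) = P A)
    (n k l : ℕ) (hk : 1 ≤ k)
    (S : Set ((Fin k → X) × (Fin n → Fin k → X))) (hS : MeasurableSet S) :
    2 * |((P.map (fun ω => ((fun i : Fin k => ω (i : ℤ)),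
          fun (j : Fin n) (i : Fin k) => ω (((j : ℤ) + 1) * ((k : ℤ) + (l : ℤ)) + (i : ℤ))))) S).toReal
        - (((P.map (fun ω (i : Fin k) => ω (i : ℤ))).prod (P.map (blocks n k l))) S).toReal|
      ≤ betaMix P l := by
  set m : ℕ := k - 1 with hmdef
  have hm : (m : ℤ) = (k : ℤ) - 1 := by
    rw [hmdef]
    push_cast [Nat.cast_sub hk]
    ring
  set π₁ : (ℤ → X) → ({i : ℤ // i ≤ 0} → X) := fun ω i => ω (i : ℤ) with hπ₁
  set π₂ : (ℤ → X) → ({i : ℤ // (l : ℤ) ≤ i} → X) := fun ω i => ω (i : ℤ) with hπ₂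
  have hπ₁m : Measurable π₁ := measurable_pi_lambda _ (fun i => measurable_pi_apply _)
  have hπ₂m : Measurable π₂ := measurable_pi_lambda _ (fun i => measurable_pi_apply _)
  set p : (ℤ → X) → ({i : ℤ // i ≤ 0} → X) × ({i : ℤ // (l : ℤ) ≤ i} → X) :=
    fun ω => (π₁ ω, π₂ ω) with hp
  have hpm : Measurable p := hπ₁m.prodMk hπ₂m
  have hsub1 : ∀ i : Fin k, (i : ℤ) + 1 - (k : ℤ) ≤ 0 := by
    intro i
    have := i.isLt
    omega
  have hsub2 : ∀ (j : Fin n) (i : Fin k),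
      (l : ℤ) ≤ ((j : ℤ) + 1) * ((k : ℤ) + (l : ℤ)) + (i : ℤ) + 1 - (k : ℤ) := by
    intro j i
    have h1 : (0 : ℤ) ≤ (j : ℤ) := by positivity
    have h2 : (0 : ℤ) ≤ (i : ℤ) := by positivity
    have h3 : (0 : ℤ) ≤ (k : ℤ) := by positivity
    have h4 : (0 : ℤ) ≤ (l : ℤ) := by positivity
    nlinarith [mul_nonneg h1 (by linarith : (0 : ℤ) ≤ (k : ℤ) + (l : ℤ))]
  set φ : ({i : ℤ // i ≤ 0} → X) → (Fin k → X) :=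
    fun y i => y ⟨(i : ℤ) + 1 - (k : ℤ), hsub1 i⟩ with hφ
  set ψ : ({i : ℤ // (l : ℤ) ≤ i} → X) → (Fin n → Fin k → X) :=
    fun y j i => y ⟨((j : ℤ) + 1) * ((k : ℤ) + (l : ℤ)) + (i : ℤ) + 1 - (k : ℤ), hsub2 j i⟩ with hψ
  have hφm : Measurable φ := measurable_pi_lambda _ (fun i => measurable_pi_apply _)
  have hψm : Measurable ψ :=
    measurable_pi_lambda _ (fun j => measurable_pi_lambda _ (fun i => measurable_pi_apply _))
  set J : Measure (({i : ℤ // i ≤ 0} → X) × ({i : ℤ // (l : ℤ) ≤ i} → X)) := P.map p with hJ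
  set K : Measure (({i : ℤ // i ≤ 0} → X) × ({i : ℤ // (l : ℤ) ≤ i} → X)) :=
    (P.map π₁).prod (P.map π₂) with hK
  haveI : IsProbabilityMeasure J := Measure.isProbabilityMeasure_map hpm.aemeasurable
  haveI : IsProbabilityMeasure (P.map π₁) := Measure.isProbabilityMeasure_map hπ₁m.aemeasurable
  haveI : IsProbabilityMeasure (P.map π₂) := Measure.isProbabilityMeasure_map hπ₂m.aemeasurable
  haveI : IsProbabilityMeasure K := by rw [hK]; infer_instance
  -- composition identities
  have hG : (Prod.map φ ψ) ∘ p ∘ shif m = (fun ω => ((fun i : Fin k => ω (i : ℤ)),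
      fun (j : Fin n) (i : Fin k) => ω (((j : ℤ) + 1) * ((k : ℤ) + (l : ℤ)) + (i : ℤ)))) := by
    funext ω
    refine Prod.ext ?_ ?_
    · funext i
      show ω ((i : ℤ) + 1 - (k : ℤ) + (m : ℤ)) = ω (i : ℤ)
      congr 1
      rw [hm]; ring
    · funext j i
      show ω (((j : ℤ) + 1) * ((k : ℤ) + (l : ℤ)) + (i : ℤ) + 1 - (k : ℤ) + (m : ℤ))
          = ω (((j : ℤ) + 1) * ((k : ℤ) + (l : ℤ)) + (i : ℤ))
      congr 1
      rw [hm]; ring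
  have hφπ : φ ∘ π₁ ∘ shif m = (fun ω (i : Fin k) => ω (i : ℤ)) := by
    funext ω i
    show ω ((i : ℤ) + 1 - (k : ℤ) + (m : ℤ)) = ω (i : ℤ)
    congr 1
    rw [hm]; ring
  have hψπ : ψ ∘ π₂ ∘ shif m = blocks n k l ∘ shif (k + l) := by
    funext ω j i
    show ω (((j : ℤ) + 1) * ((k : ℤ) + (l : ℤ)) + (i : ℤ) + 1 - (k : ℤ) + (m : ℤ))
        = ω ((j : ℤ) * ((k : ℤ) + (l : ℤ)) + (i : ℤ) + ((k + l : ℕ) : ℤ))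
    congr 1
    rw [hm]; push_cast; ring
  have hblocksm : Measurable (blocks n k l (X := X)) :=
    measurable_pi_lambda _ (fun j => measurable_pi_lambda _ (fun i => measurable_pi_apply _))
  -- measure identities
  have hmapG : P.map (fun ω => ((fun i : Fin k => ω (i : ℤ)),
      fun (j : Fin n) (i : Fin k) => ω (((j : ℤ) + 1) * ((k : ℤ) + (l : ℤ)) + (i : ℤ))))
      = J.map (Prod.map φ ψ) := by
    have hG' : ((Prod.map φ ψ ∘ p) ∘ shif m) = (fun ω => ((fun i : Fin k => ω (i : ℤ)),
        fun (j : Fin n) (i : Fin k) => ω (((j : ℤ) + 1) * ((k : ℤ) + (l : ℤ)) + (i : ℤ)))) := hG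
    rw [hJ, Measure.map_map (hφm.prodMap hψm) hpm]
    conv_rhs => rw [← map_shif P hstat m]
    rw [Measure.map_map ((hφm.prodMap hψm).comp hpm) (shif_measurable m), hG']
  have hν : P.map (fun ω (i : Fin k) => ω (i : ℤ)) = (P.map π₁).map φ := by
    rw [Measure.map_map hφm hπ₁m]
    conv_rhs => rw [← map_shif P hstat m]
    have hφπ' : ((φ ∘ π₁) ∘ shif m) = (fun ω (i : Fin k) => ω (i : ℤ)) := hφπ
    rw [Measure.map_map (hφm.comp hπ₁m) (shif_measurable m), hφπ']
  have hQ : P.map (blocks n k l) = (P.map π₂).map ψ := by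
    rw [Measure.map_map hψm hπ₂m]
    conv_rhs => rw [← map_shif P hstat m]
    have hψπ' : ((ψ ∘ π₂) ∘ shif m) = blocks n k l ∘ shif (k + l) := hψπ
    rw [Measure.map_map (hψm.comp hπ₂m) (shif_measurable m), hψπ']
    rw [← Measure.map_map hblocksm (shif_measurable (k + l)), map_shif P hstat (k + l)]
  have hKmap : (P.map (fun ω (i : Fin k) => ω (i : ℤ))).prod (P.map (blocks n k l))
      = K.map (Prod.map φ ψ) := by
    rw [hν, hQ, hK]
    exact Measure.map_prod_map _ _ hφm hψm
  -- the beta-mixing hypothesis for J, K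
  have hc : ∀ (nA nB : ℕ) (A : Fin nA → Set ({i : ℤ // i ≤ 0} → X))
      (B : Fin nB → Set ({i : ℤ // (l : ℤ) ≤ i} → X)),
      (∀ i, MeasurableSet (A i)) → Pairwise (Function.onFun Disjoint A) →
      (⋃ i, A i) = univ →
      (∀ j, MeasurableSet (B j)) → Pairwise (Function.onFun Disjoint B) →
      (⋃ j, B j) = univ →
      ∑ i, ∑ j, |(J (A i ×ˢ B j)).toReal - (K (A i ×ˢ B j)).toReal| ≤ betaMix P l := by
    intro nA nB A B hA hAd hAc hB hBd hBc
    refine le_betaMix P l ⟨nA, nB, (fun i => π₁ ⁻¹' A i), (fun j => π₂ ⁻¹' B j),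
      fun i => ⟨A i, hA i, rfl⟩,
      fun i i' hii' => Disjoint.preimage π₁ (hAd hii'),
      by rw [← preimage_iUnion, hAc, preimage_univ],
      fun j => ⟨B j, hB j, rfl⟩,
      fun j j' hjj' => Disjoint.preimage π₂ (hBd hjj'),
      by rw [← preimage_iUnion, hBc, preimage_univ], ?_⟩
    refine Finset.sum_congr rfl fun i _ => Finset.sum_congr rfl fun j _ => ?_
    have e1 : J (A i ×ˢ B j) = P (π₁ ⁻¹' A i ∩ π₂ ⁻¹' B j) := by
      rw [hJ, Measure.map_apply hpm ((hA i).prod (hB j)), hp, Set.mk_preimage_prod]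
    have e2 : K (A i ×ˢ B j) = P.map π₁ (A i) * P.map π₂ (B j) :=
      Measure.prod_prod _ _
    have e3 : P.map π₁ (A i) = P (π₁ ⁻¹' A i) := Measure.map_apply hπ₁m (hA i)
    have e4 : P.map π₂ (B j) = P (π₂ ⁻¹' B j) := Measure.map_apply hπ₂m (hB j)
    rw [e1, e2, e3, e4, ENNReal.toReal_mul]
  -- conclude
  have hT : MeasurableSet ((Prod.map φ ψ) ⁻¹' S) := (hφm.prodMap hψm) hS
  have habs := abstract_bound J K hc ((Prod.map φ ψ) ⁻¹' S) hT
  rw [hmapG, hKmap, Measure.map_apply (hφm.prodMap hψm) hS,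
    Measure.map_apply (hφm.prodMap hψm) hS]
  exact habs

end Core

section Main

variable {X : Type*} [MeasurableSpace X] (P : Measure (ℤ → X)) [IsProbabilityMeasure P]

lemma blocks_measurable (n k l : ℕ) : Measurable (blocks n k l (X := X)) :=
  measurable_pi_lambda _ (fun j => measurable_pi_lambda _ (fun i => measurable_pi_apply _))

lemma claim (hstat : ∀ A : Set (ℤ → X), MeasurableSet A →
      P ((fun ω i => ω (i + 1)) ⁻¹' A) = P A) (k l : ℕ) (hk : 1 ≤ k) :
    ∀ n, 1 ≤ n → ∀ (mm : ℕ) (C : Fin mm → Set (Fin n → Fin k → X)),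
      (∀ i, MeasurableSet (C i)) → Pairwise (Function.onFun Disjoint C) →
      (⋃ i, C i) = univ →
      ∑ i, |((P.map (blocks n k l)) (C i)).toReal
          - ((Measure.pi fun _ : Fin n => P.map (fun ω (i : Fin k) => ω (i : ℤ))) (C i)).toReal|
        ≤ ((n : ℝ) - 1) * betaMix P l := by
  haveI hν : IsProbabilityMeasure (P.map (fun ω (i : Fin k) => ω (i : ℤ))) :=
    Measure.isProbabilityMeasure_map (measurable_pi_lambda _ (fun i => measurable_pi_apply _)).aemeasurable
  refine Nat.le_induction ?_ ?_
  · -- base case n = 1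
    intro mm C hC _ _
    have hkey : ∀ i, (P.map (blocks 1 k l)) (C i)
        = (Measure.pi fun _ : Fin 1 => P.map (fun ω (i : Fin k) => ω (i : ℤ))) (C i) := by
      intro i
      set ν := P.map (fun ω (i : Fin k) => ω (i : ℤ)) with hνdef
      set e := MeasurableEquiv.funUnique (Fin 1) (Fin k → X) with he
      have hmp := measurePreserving_funUnique (β := Fin k → X) ν (Fin 1)
      have h1 : (Measure.pi fun _ : Fin 1 => ν) (C i) = ν (e.symm ⁻¹' (C i)) := by
        have hmeq : (Measure.pi fun _ : Fin 1 => ν).map e = ν := hmp.map_eq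
        have hpre : ⇑e ⁻¹' (⇑e.symm ⁻¹' (C i)) = C i := by
          ext x; simp
        calc (Measure.pi fun _ : Fin 1 => ν) (C i)
            = (Measure.pi fun _ : Fin 1 => ν) (⇑e ⁻¹' (⇑e.symm ⁻¹' (C i))) := by rw [hpre]
          _ = ((Measure.pi fun _ : Fin 1 => ν).map e) (⇑e.symm ⁻¹' (C i)) :=
              (Measure.map_apply e.measurable ((hC i).preimage e.symm.measurable)).symm
          _ = ν (⇑e.symm ⁻¹' (C i)) := by rw [hmeq]
      have h2 : blocks 1 k l (X := X) = ⇑e.symm ∘ (fun ω (i : Fin k) => ω (i : ℤ)) := by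
        funext ω j i
        show ω ((j : ℤ) * ((k : ℤ) + (l : ℤ)) + (i : ℤ)) = ω (i : ℤ)
        congr 1
        have : (j : ℤ) = 0 := by
          have := j.isLt
          omega
        rw [this]; ring
      rw [h1, h2, ← Measure.map_map e.symm.measurable
        (measurable_pi_lambda _ (fun i => measurable_pi_apply _)),
        Measure.map_apply e.symm.measurable (hC i), hνdef,
        Measure.map_apply (measurable_pi_lambda _ (fun i => measurable_pi_apply _))
          ((hC i).preimage e.symm.measurable)]
    have : ∀ i ∈ Finset.univ, |((P.map (blocks 1 k l)) (C i)).toReal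
        - ((Measure.pi fun _ : Fin 1 => P.map (fun ω (i : Fin k) => ω (i : ℤ))) (C i)).toReal|
        = 0 := by
      intro i _
      rw [hkey i, sub_self, abs_zero]
    rw [Finset.sum_congr rfl this, Finset.sum_const, smul_zero]
    simp [betaMix_nonneg P l]
  · -- inductive step
    intro n hn IH mm C hC hCd hCc
    set ν := P.map (fun ω (i : Fin k) => ω (i : ℤ)) with hνdef
    set Qn := P.map (blocks n k l) with hQn
    set Qtn := (Measure.pi fun _ : Fin n => ν) with hQtn
    haveI : IsProbabilityMeasure Qn :=
      Measure.isProbabilityMeasure_map (blocks_measurable n k l).aemeasurable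
    set Gfun : (ℤ → X) → (Fin k → X) × (Fin n → Fin k → X) := fun ω => ((fun i : Fin k => ω (i : ℤ)),
      fun (j : Fin n) (i : Fin k) => ω (((j : ℤ) + 1) * ((k : ℤ) + (l : ℤ)) + (i : ℤ))) with hGfun
    have hGm : Measurable Gfun := by
      apply Measurable.prodMk
      · exact measurable_pi_lambda _ (fun i => measurable_pi_apply _)
      · exact measurable_pi_lambda _ (fun j => measurable_pi_lambda _
          (fun i => measurable_pi_apply _))
    haveI : IsProbabilityMeasure (P.map Gfun) := Measure.isProbabilityMeasure_map hGm.aemeasurable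
    set E := MeasurableEquiv.piFinSuccAbove (fun _ : Fin (n + 1) => (Fin k → X)) 0 with hE
    set C' : Fin mm → Set ((Fin k → X) × (Fin n → Fin k → X)) :=
      fun i => ⇑E.symm ⁻¹' (C i) with hC'
    have hC'm : ∀ i, MeasurableSet (C' i) := fun i => (hC i).preimage E.symm.measurable
    have hC'd : Pairwise (Function.onFun Disjoint C') :=
      fun i j hij => Disjoint.preimage _ (hCd hij)
    have hC'c : (⋃ i, C' i) = univ := by
      rw [hC'] at *
      rw [← preimage_iUnion, hCc, preimage_univ]
    have hpre : ∀ i, ⇑E ⁻¹' (C' i) = C i := by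
      intro i
      rw [hC']
      ext x; simp
    -- identify the measures
    have hEb : ⇑E ∘ blocks (n + 1) k l = Gfun := by
      funext ω
      refine Prod.ext ?_ ?_
      · funext i
        show ω (((0 : Fin (n + 1)) : ℤ) * ((k : ℤ) + (l : ℤ)) + (i : ℤ)) = ω (i : ℤ)
        norm_num
      · funext j i
        have hjs : ((j.succ : Fin (n + 1)) : ℤ) = (j : ℤ) + 1 := by
          have h := Fin.val_succ j
          omega
        show ω (((j.succ : Fin (n + 1)) : ℤ) * ((k : ℤ) + (l : ℤ)) + (i : ℤ))
            = ω (((j : ℤ) + 1) * ((k : ℤ) + (l : ℤ)) + (i : ℤ))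
        rw [hjs]
    have h1 : ∀ i, (P.map (blocks (n + 1) k l)) (C i) = (P.map Gfun) (C' i) := by
      intro i
      calc (P.map (blocks (n + 1) k l)) (C i)
          = (P.map (blocks (n + 1) k l)) (⇑E ⁻¹' (C' i)) := by rw [hpre i]
        _ = ((P.map (blocks (n + 1) k l)).map E) (C' i) :=
            (Measure.map_apply E.measurable (hC'm i)).symm
        _ = (P.map Gfun) (C' i) := by
            rw [Measure.map_map E.measurable (blocks_measurable (n + 1) k l), hEb]
    have hmpE := measurePreserving_piFinSuccAbove (fun _ : Fin (n + 1) => ν) 0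
    have h2 : ∀ i, (Measure.pi fun _ : Fin (n + 1) => ν) (C i) = (ν.prod Qtn) (C' i) := by
      intro i
      calc (Measure.pi fun _ : Fin (n + 1) => ν) (C i)
          = (Measure.pi fun _ : Fin (n + 1) => ν) (⇑E ⁻¹' (C' i)) := by rw [hpre i]
        _ = ((Measure.pi fun _ : Fin (n + 1) => ν).map E) (C' i) :=
            (Measure.map_apply E.measurable (hC'm i)).symm
        _ = (ν.prod Qtn) (C' i) := by rw [hmpE.map_eq, hQtn]
    -- split into two sums
    have hsplit : ∀ i, |((P.map (blocks (n + 1) k l)) (C i)).toReal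
        - ((Measure.pi fun _ : Fin (n + 1) => ν) (C i)).toReal|
        ≤ |((P.map Gfun) (C' i)).toReal - ((ν.prod Qn) (C' i)).toReal|
          + |((ν.prod Qn) (C' i)).toReal - ((ν.prod Qtn) (C' i)).toReal| := by
      intro i
      rw [h1 i, h2 i]
      exact abs_sub_le _ _ _
    have termA : ∑ i, |((P.map Gfun) (C' i)).toReal - ((ν.prod Qn) (C' i)).toReal|
        ≤ betaMix P l := by
      refine partition_sum_le (P.map Gfun) (ν.prod Qn)
        (fun S hS => ?_) hC'm hC'd hC'c
      exact core_bound P hstat n k l hk S hS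
    have termB : ∑ i, |((ν.prod Qn) (C' i)).toReal - ((ν.prod Qtn) (C' i)).toReal|
        ≤ ((n : ℝ) - 1) * betaMix P l := by
      haveI : IsProbabilityMeasure Qtn := by rw [hQtn]; infer_instance
      set f : Fin mm → (Fin k → X) → ℝ≥0∞ := fun i v => Qn (Prod.mk v ⁻¹' C' i) with hf
      set g : Fin mm → (Fin k → X) → ℝ≥0∞ := fun i v => Qtn (Prod.mk v ⁻¹' C' i) with hg
      set h : Fin mm → (Fin k → X) → ℝ≥0∞ :=
        fun i v => (f i v - g i v) + (g i v - f i v) with hh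
      have hfm : ∀ i, Measurable (f i) := fun i => measurable_measure_prodMk_left (hC'm i)
      have hgm : ∀ i, Measurable (g i) := fun i => measurable_measure_prodMk_left (hC'm i)
      have hhm : ∀ i, Measurable (h i) :=
        fun i => ((hfm i).sub (hgm i)).add ((hgm i).sub (hfm i))
      have hfle : ∀ i v, f i v ≤ 1 := fun i v => prob_le_one
      have hgle : ∀ i v, g i v ≤ 1 := fun i v => prob_le_one
      have hfne : ∀ i v, f i v ≠ ⊤ := fun i v => ne_top_of_le_ne_top ENNReal.one_ne_top (hfle i v)
      have hgne : ∀ i v, g i v ≠ ⊤ := fun i v => ne_top_of_le_ne_top ENNReal.one_ne_top (hgle i v)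
      have hhle : ∀ i v, h i v ≤ 2 := by
        intro i v
        calc h i v ≤ f i v + g i v := add_le_add tsub_le_self tsub_le_self
          _ ≤ 1 + 1 := add_le_add (hfle i v) (hgle i v)
          _ = 2 := by norm_num
      have hhne : ∀ i v, h i v ≠ ⊤ :=
        fun i v => ne_top_of_le_ne_top (by norm_num) (hhle i v)
      have hhint : ∀ i, ∫⁻ v, h i v ∂ν ≠ ⊤ := by
        intro i
        have hb2 : ∫⁻ v, h i v ∂ν ≤ 2 := by
          calc ∫⁻ v, h i v ∂ν ≤ ∫⁻ _, 2 ∂ν := lintegral_mono (fun v => hhle i v)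
            _ = 2 := by rw [lintegral_const, measure_univ, mul_one]
        exact ne_top_of_le_ne_top (by norm_num) hb2
      have hterm : ∀ i, |((ν.prod Qn) (C' i)).toReal - ((ν.prod Qtn) (C' i)).toReal|
          ≤ (∫⁻ v, h i v ∂ν).toReal := by
        intro i
        have ha : (ν.prod Qn) (C' i) = ∫⁻ v, f i v ∂ν := Measure.prod_apply (hC'm i)
        have hb : (ν.prod Qtn) (C' i) = ∫⁻ v, g i v ∂ν := Measure.prod_apply (hC'm i)
        have h1 : ∫⁻ v, f i v ∂ν ≤ (∫⁻ v, g i v ∂ν) + ∫⁻ v, h i v ∂ν := by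
          calc ∫⁻ v, f i v ∂ν ≤ ∫⁻ v, (g i v + h i v) ∂ν := by
                refine lintegral_mono fun v => ?_
                calc f i v ≤ g i v + (f i v - g i v) := le_add_tsub
                  _ ≤ g i v + h i v := add_le_add le_rfl le_self_add
            _ = (∫⁻ v, g i v ∂ν) + ∫⁻ v, h i v ∂ν := lintegral_add_left (hgm i) _
        have h2 : ∫⁻ v, g i v ∂ν ≤ (∫⁻ v, f i v ∂ν) + ∫⁻ v, h i v ∂ν := by
          calc ∫⁻ v, g i v ∂ν ≤ ∫⁻ v, (f i v + h i v) ∂ν := by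
                refine lintegral_mono fun v => ?_
                calc g i v ≤ f i v + (g i v - f i v) := le_add_tsub
                  _ ≤ f i v + h i v := add_le_add le_rfl le_add_self
            _ = (∫⁻ v, f i v ∂ν) + ∫⁻ v, h i v ∂ν := lintegral_add_left (hfm i) _
        have hfin1 : (∫⁻ v, f i v ∂ν) ≠ ⊤ := by rw [← ha]; exact measure_ne_top _ _
        have hfin2 : (∫⁻ v, g i v ∂ν) ≠ ⊤ := by rw [← hb]; exact measure_ne_top _ _
        rw [ha, hb, abs_le]
        constructor
        · have hm2 := ENNReal.toReal_mono (ENNReal.add_ne_top.2 ⟨hfin1, hhint i⟩) h2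
          rw [ENNReal.toReal_add hfin1 (hhint i)] at hm2
          linarith
        · have hm1 := ENNReal.toReal_mono (ENNReal.add_ne_top.2 ⟨hfin2, hhint i⟩) h1
          rw [ENNReal.toReal_add hfin2 (hhint i)] at hm1
          linarith
      have hnonneg : 0 ≤ ((n : ℝ) - 1) * betaMix P l := by
        have h1n : (1 : ℝ) ≤ (n : ℝ) := by exact_mod_cast hn
        exact mul_nonneg (by linarith) (betaMix_nonneg P l)
      have hpt : ∀ v, ∑ i, h i v ≤ ENNReal.ofReal (((n : ℝ) - 1) * betaMix P l) := by
        intro v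
        have hsec : ∀ i, MeasurableSet (Prod.mk v ⁻¹' C' i) :=
          fun i => (hC'm i).preimage measurable_prodMk_left
        have hsecd : Pairwise (Function.onFun Disjoint (fun i => Prod.mk v ⁻¹' C' i)) :=
          fun i j hij => Disjoint.preimage _ (hC'd hij)
        have hsecc : (⋃ i, Prod.mk v ⁻¹' C' i) = univ := by
          rw [← preimage_iUnion, hC'c, preimage_univ]
        have hIH := IH mm (fun i => Prod.mk v ⁻¹' C' i) hsec hsecd hsecc
        have htoReal : ∀ i, (h i v).toReal = |(f i v).toReal - (g i v).toReal| := by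
          intro i
          rcases le_total (g i v) (f i v) with hle | hle
          · have h0 : g i v - f i v = 0 := tsub_eq_zero_of_le hle
            have : h i v = f i v - g i v := by rw [hh]; dsimp only; rw [h0, add_zero]
            rw [this, ENNReal.toReal_sub_of_le hle (hfne i v),
              abs_of_nonneg (sub_nonneg.2 (ENNReal.toReal_mono (hfne i v) hle))]
          · have h0 : f i v - g i v = 0 := tsub_eq_zero_of_le hle
            have : h i v = g i v - f i v := by rw [hh]; dsimp only; rw [h0, zero_add]
            rw [this, ENNReal.toReal_sub_of_le hle (hgne i v), abs_sub_comm,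
              abs_of_nonneg (sub_nonneg.2 (ENNReal.toReal_mono (hgne i v) hle))]
        have hsum : ∑ i, (h i v).toReal ≤ ((n : ℝ) - 1) * betaMix P l := by
          rw [Finset.sum_congr rfl (fun i _ => htoReal i)]
          exact hIH
        calc ∑ i, h i v = ENNReal.ofReal ((∑ i, h i v).toReal) :=
              (ENNReal.ofReal_toReal (by
                exact (ENNReal.sum_lt_top.2 fun i _ => (hhne i v).lt_top).ne)).symm
          _ ≤ ENNReal.ofReal (((n : ℝ) - 1) * betaMix P l) := by
              apply ENNReal.ofReal_le_ofReal
              rw [ENNReal.toReal_sum (fun i _ => hhne i v)]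
              exact hsum
      calc ∑ i, |((ν.prod Qn) (C' i)).toReal - ((ν.prod Qtn) (C' i)).toReal|
          ≤ ∑ i, (∫⁻ v, h i v ∂ν).toReal := Finset.sum_le_sum fun i _ => hterm i
        _ = (∑ i, ∫⁻ v, h i v ∂ν).toReal := (ENNReal.toReal_sum (fun i _ => hhint i)).symm
        _ = (∫⁻ v, ∑ i, h i v ∂ν).toReal := by
            rw [← lintegral_finset_sum _ (fun i _ => hhm i)]
        _ ≤ (ENNReal.ofReal (((n : ℝ) - 1) * betaMix P l)).toReal := by
            apply ENNReal.toReal_mono ENNReal.ofReal_ne_top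
            calc ∫⁻ v, ∑ i, h i v ∂ν
                ≤ ∫⁻ _, ENNReal.ofReal (((n : ℝ) - 1) * betaMix P l) ∂ν := lintegral_mono hpt
              _ = ENNReal.ofReal (((n : ℝ) - 1) * betaMix P l) := by
                  rw [lintegral_const, measure_univ, mul_one]
        _ = ((n : ℝ) - 1) * betaMix P l := ENNReal.toReal_ofReal hnonneg
    calc ∑ i, |((P.map (blocks (n + 1) k l)) (C i)).toReal
        - ((Measure.pi fun _ : Fin (n + 1) => ν) (C i)).toReal|
        ≤ ∑ i, (|((P.map Gfun) (C' i)).toReal - ((ν.prod Qn) (C' i)).toReal|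
          + |((ν.prod Qn) (C' i)).toReal - ((ν.prod Qtn) (C' i)).toReal|) :=
          Finset.sum_le_sum fun i _ => hsplit i
      _ = ∑ i, |((P.map Gfun) (C' i)).toReal - ((ν.prod Qn) (C' i)).toReal|
          + ∑ i, |((ν.prod Qn) (C' i)).toReal - ((ν.prod Qtn) (C' i)).toReal| :=
          Finset.sum_add_distrib
      _ ≤ betaMix P l + ((n : ℝ) - 1) * betaMix P l := add_le_add termA termB
      _ = (((n + 1 : ℕ) : ℝ) - 1) * betaMix P l := by push_cast; ring

end Main

end Blocking

/-- Blocking lemma: for a stationary process `P`, the joint distribution `Q⁽ⁿ⁾` of `n`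
blocks of length `k` separated by gaps of length `l` is within variational distance
`(n−1) β_P(l)` of the product `Q̃⁽ⁿ⁾` of `n` copies of the common block marginal `Pᵏ`. -/
theorem blocking_varDist_le
    {X : Type*} [MeasurableSpace X]
    (P : Measure (ℤ → X)) [IsProbabilityMeasure P]
    (hstat : ∀ A : Set (ℤ → X), MeasurableSet A →
      P ((fun ω i => ω (i + 1)) ⁻¹' A) = P A)
    (n k l : ℕ) (hn : 1 ≤ n) (hk : 1 ≤ k) :
    varDist (P.map (blocks n k l))
        (Measure.pi fun _ : Fin n => P.map (fun ω (i : Fin k) => ω (i : ℤ)))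
      ≤ ((n : ℝ) - 1) * betaMix P l := by
  have hnonneg : 0 ≤ ((n : ℝ) - 1) * betaMix P l := by
    have h1n : (1 : ℝ) ≤ (n : ℝ) := by exact_mod_cast hn
    exact mul_nonneg (by linarith) (Blocking.betaMix_nonneg P l)
  unfold varDist
  refine Real.sSup_le ?_ hnonneg
  rintro x ⟨mm, C, hC, hCd, hCc, rfl⟩
  exact Blocking.claim P hstat k l hk n hn mm C hC hCd hCc
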